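/- Let Σ be a finite alphabet of size q ≥ 2, n ≥ 1, δ ∈ (0,1), and set α = (1 − 1/q)(1 + δ). Consider a finitary watermarking scheme with fixed prompt x̄, finite key space K with a probability distribution, randomized output map Model_κ producing strings in Σ^n, and detection map Detect : K × Σ^n → {true, false}. Suppose soundness error ε_s: for every fixed ŷ ∈ Σ^n, P_κ[Detect(κ, ŷ) = true] ≤ ε_s. Let f be the truncated uniform resampler with budget αn applied to y drawn from Model_κ(x̄), and suppose robustness error ε_r: P[Detect(κ, f(y)) = false ∧ f(y) ≠ y] ≤ ε_r. Then ε_s + ε_r ≥ 1 − q^{−n} − exp(−δ²(1 − 1/q)n/3). In particular, no watermarking scheme with fixed-length outputs can have both negligible soundness error and negligible robustness error against tampering at rate (1 − 1/q)(1 + δ). -/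
import Mathlib


open Finset Classical

/-- The truncated uniform resampler with budget `b`: on codeword `γ` and uniform
randomness `u`, it outputs `u` if `dist(u, γ) ≤ b` and `γ` otherwise. -/
noncomputable def resample {S : Type} [Fintype S] [DecidableEq S] {n : ℕ}
    (b : ℝ) (γ u : Fin n → S) : Fin n → S :=
  if (hammingDist u γ : ℝ) ≤ b then u else γ


lemma key_ineq (δ : ℝ) (h0 : 0 < δ) (h1 : δ < 1) :
    Real.exp (4*δ/5) ≤ 1 + (4*δ/5)*(1+δ) - δ^2/3 := by
  have hx : |4*δ/5| ≤ 1 := by rw [abs_of_nonneg (by linarith)]; linarith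
  have h := Real.exp_bound hx (n := 3) (by norm_num)
  rw [Finset.sum_range_succ, Finset.sum_range_succ, Finset.sum_range_succ,
    Finset.sum_range_zero] at h
  have h2 := (abs_le.1 h).2
  rw [abs_of_nonneg (by linarith)] at h2
  norm_num [Nat.factorial] at h2
  nlinarith [mul_pos (mul_pos h0 h0) h0]

lemma hamming_eq_sum {S : Type} [Fintype S] [DecidableEq S] {n : ℕ} (u y : Fin n → S) :
    (hammingDist u y : ℝ) = ∑ i, if u i ≠ y i then (1:ℝ) else 0 := by
  have : hammingDist u y = (univ.filter fun i => u i ≠ y i).card := rfl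
  rw [this, Finset.card_filter]
  push_cast [apply_ite (Nat.cast : ℕ → ℝ)]
  rfl

lemma chernoff {S : Type} [Fintype S] [DecidableEq S] {n : ℕ}
    (hq : 2 ≤ Fintype.card S) (δ : ℝ) (h0 : 0 < δ) (h1 : δ < 1) (y : Fin n → S) :
    ∑ u : Fin n → S,
      (if ((1 - (Fintype.card S : ℝ)⁻¹) * (1 + δ) * n : ℝ) < hammingDist u y
       then ((Fintype.card S : ℝ) ^ n)⁻¹ else 0)
    ≤ Real.exp (-(δ ^ 2 * (1 - (Fintype.card S : ℝ)⁻¹) * n / 3)) := by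
  set q : ℝ := (Fintype.card S : ℝ) with hqdef
  have hq2 : (2:ℝ) ≤ q := by rw [hqdef]; exact_mod_cast hq
  have hq0 : 0 < q := by linarith
  have hqn : (0:ℝ) < q ^ n := by positivity
  set p : ℝ := 1 - q⁻¹ with hpdef
  have hp0 : 0 < p := by
    have : q⁻¹ < 1 := by rw [inv_lt_one_iff₀]; right; linarith
    simp [hpdef]; linarith
  have hp1 : p ≤ 1 := by
    have : 0 < q⁻¹ := by positivity
    simp [hpdef]; linarith
  set t : ℝ := 4*δ/5 with htdef
  have ht0 : 0 < t := by positivity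
  set b : ℝ := p * (1 + δ) * n with hbdef
  have hb0 : 0 ≤ b := by positivity
  set e : ℝ := Real.exp t with hedef
  have he1 : 1 ≤ e := by rw [hedef]; calc (1:ℝ) = Real.exp 0 := by simp
                                         _ ≤ Real.exp t := Real.exp_le_exp.2 (le_of_lt ht0)
  -- step A : pointwise bound by exponential
  have stepA : ∀ u : Fin n → S,
      (if (b : ℝ) < hammingDist u y then (q ^ n)⁻¹ else 0)
        ≤ (q ^ n)⁻¹ * Real.exp (t * ((hammingDist u y : ℝ) - b)) := by
    intro u
    split_ifs with h
    · have : (0:ℝ) ≤ t * ((hammingDist u y : ℝ) - b) := by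
        apply mul_nonneg (le_of_lt ht0); linarith
      have := Real.one_le_exp this
      calc (q ^ n)⁻¹ = (q ^ n)⁻¹ * 1 := by ring
        _ ≤ _ := by apply mul_le_mul_of_nonneg_left this (by positivity)
    · positivity
  -- step B : compute the sum of exponentials
  have stepB : ∑ u : Fin n → S, Real.exp (t * (hammingDist u y : ℝ))
      = ((q - 1) * e + 1) ^ n := by
    have hterm : ∀ u : Fin n → S, Real.exp (t * (hammingDist u y : ℝ))
        = ∏ i, (if u i ≠ y i then e else 1) := by
      intro u
      rw [hamming_eq_sum, Finset.mul_sum, Real.exp_sum]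
      apply Finset.prod_congr rfl
      intro i _
      split_ifs <;> simp [hedef]
    calc ∑ u : Fin n → S, Real.exp (t * (hammingDist u y : ℝ))
        = ∑ u : Fin n → S, ∏ i, (if u i ≠ y i then e else 1) := by
          exact Finset.sum_congr rfl fun u _ => hterm u
      _ = ∏ i : Fin n, ∑ a : S, (if a ≠ y i then e else 1) := by
          rw [show (univ : Finset (Fin n → S)) = Fintype.piFinset (fun _ => univ)
            from (Fintype.piFinset_univ).symm]
          exact (Finset.prod_univ_sum (fun _ => univ)
            (fun i a => if a ≠ y i then e else 1)).symm
      _ = ∏ i : Fin n, ((q - 1) * e + 1) := by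
          apply Finset.prod_congr rfl
          intro i _
          have : ∀ a : S, (if a ≠ y i then e else 1)
              = e + (if a = y i then 1 - e else 0) := by
            intro a; by_cases h : a = y i <;> simp [h]
          rw [Finset.sum_congr rfl fun a _ => this a, Finset.sum_add_distrib,
            Finset.sum_const, Finset.sum_ite_eq' univ (y i) (fun _ => 1 - e)]
          simp [Finset.card_univ, hqdef]
          ring
      _ = ((q - 1) * e + 1) ^ n := by
          rw [Finset.prod_const, Finset.card_univ, Fintype.card_fin]
  have hk := key_ineq δ h0 h1
  rw [← htdef, ← hedef] at hk
  have hnp : (0:ℝ) ≤ (n:ℝ) * p := by positivity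
  have hbase : q⁻¹ * ((q - 1) * e + 1) = 1 + p * (e - 1) := by
    rw [hpdef]; field_simp; ring
  calc ∑ u : Fin n → S, (if (b : ℝ) < hammingDist u y then (q ^ n)⁻¹ else 0)
      ≤ ∑ u : Fin n → S, (q ^ n)⁻¹ * Real.exp (t * ((hammingDist u y : ℝ) - b)) :=
        Finset.sum_le_sum fun u _ => stepA u
    _ = (q ^ n)⁻¹ * Real.exp (-(t*b)) * ∑ u : Fin n → S, Real.exp (t * (hammingDist u y : ℝ)) := by
        rw [Finset.mul_sum]
        apply Finset.sum_congr rfl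
        intro u _
        rw [show t * ((hammingDist u y : ℝ) - b) = -(t*b) + t * (hammingDist u y : ℝ) by ring,
          Real.exp_add]
        ring
    _ = Real.exp (-(t*b)) * (q⁻¹ * ((q - 1) * e + 1)) ^ n := by
        rw [stepB, mul_pow, ← inv_pow]; ring
    _ ≤ Real.exp (-(t*b)) * (Real.exp (p * (e - 1))) ^ n := by
        apply mul_le_mul_of_nonneg_left _ (Real.exp_nonneg _)
        apply pow_le_pow_left₀
        · rw [hbase]; nlinarith
        · rw [hbase]
          have := Real.add_one_le_exp (p * (e - 1))
          linarith
    _ = Real.exp ((n:ℝ) * (p * (e - 1)) - t * b) := by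
        rw [← Real.exp_nat_mul, ← Real.exp_add]; ring_nf
    _ ≤ Real.exp (-(δ ^ 2 * p * (n:ℝ) / 3)) := by
        apply Real.exp_le_exp.2
        have h2 : ((n:ℝ) * p) * (e - 1 - t * (1 + δ)) ≤ ((n:ℝ) * p) * (-(δ^2/3)) := by
          apply mul_le_mul_of_nonneg_left _ hnp
          linarith
        rw [hbdef]
        nlinarith [h2]

/-- For a watermarking scheme with fixed prompt over an alphabet of
size `q ≥ 2` with fixed-length outputs in `Σ^n`, soundness error `εs`, and robustness
error `εr` against the truncated uniform resampler with budget `α·n` where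
`α = (1 - 1/q)(1 + δ)`, `δ ∈ (0,1)`, we have
`εs + εr ≥ 1 - q^(-n) - exp(-δ²(1 - 1/q)n/3)`. -/
theorem stmt_12
    {S K RS : Type} [Fintype S] [DecidableEq S] [Fintype K] [Nonempty K]
    [Fintype RS] [Nonempty RS]
    {n : ℕ} (hn : 1 ≤ n) (hq : 2 ≤ Fintype.card S)
    (δ : ℝ) (hδ0 : 0 < δ) (hδ1 : δ < 1)
    (w : K → ℝ) (hw0 : ∀ κ, 0 ≤ w κ) (hw1 : ∑ κ, w κ = 1)
    (ws : RS → ℝ) (hws0 : ∀ s, 0 ≤ ws s) (hws1 : ∑ s, ws s = 1)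
    (Model : K → RS → Fin n → S) (Detect : K → (Fin n → S) → Bool)
    (εs εr : ℝ)
    (hsound : ∀ y : Fin n → S,
      (∑ κ, if Detect κ y = true then w κ else 0) ≤ εs)
    (hrobust :
      (∑ κ, ∑ s, ∑ u : Fin n → S,
        if Detect κ (resample ((1 - (Fintype.card S : ℝ)⁻¹) * (1 + δ) * n)
              (Model κ s) u) = false
           ∧ resample ((1 - (Fintype.card S : ℝ)⁻¹) * (1 + δ) * n) (Model κ s) u
              ≠ Model κ s
        then w κ * ws s * ((Fintype.card S : ℝ) ^ n)⁻¹ else 0) ≤ εr) :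
    1 - ((Fintype.card S : ℝ) ^ n)⁻¹
      - Real.exp (-(δ ^ 2 * (1 - (Fintype.card S : ℝ)⁻¹) * n / 3)) ≤ εs + εr := by
  classical
  set b : ℝ := (1 - (Fintype.card S : ℝ)⁻¹) * (1 + δ) * n with hbdef
  set N : ℝ := ((Fintype.card S : ℝ) ^ n)⁻¹ with hNdef
  set E : ℝ := Real.exp (-(δ ^ 2 * (1 - (Fintype.card S : ℝ)⁻¹) * n / 3)) with hEdef
  have hq0 : (0:ℝ) < (Fintype.card S : ℝ) := by
    have : 0 < Fintype.card S := by omega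
    exact_mod_cast this
  have hqn : (0:ℝ) < (Fintype.card S : ℝ) ^ n := by positivity
  have hN0 : 0 ≤ N := by rw [hNdef]; positivity
  have hsum_u : (∑ _u : Fin n → S, N) = 1 := by
    rw [Finset.sum_const, Finset.card_univ, Fintype.card_fun, Fintype.card_fin,
      nsmul_eq_mul, hNdef]
    push_cast
    field_simp
  -- pointwise : one of four events happens
  have hpt : ∀ κ s (u : Fin n → S), w κ * ws s * N ≤
        (if u = Model κ s then w κ * ws s * N else 0)
      + (if b < (hammingDist u (Model κ s) : ℝ) then w κ * ws s * N else 0)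
      + (if Detect κ u = true then w κ * ws s * N else 0)
      + (if Detect κ (resample b (Model κ s) u) = false
           ∧ resample b (Model κ s) u ≠ Model κ s then w κ * ws s * N else 0) := by
    intro κ s u
    have hnn : 0 ≤ w κ * ws s * N := by
      apply mul_nonneg (mul_nonneg (hw0 κ) (hws0 s)) hN0
    have hitenn : ∀ (P : Prop) [Decidable P],
        (0:ℝ) ≤ (if P then w κ * ws s * N else 0) := by
      intro P _; split_ifs; exacts [hnn, le_refl 0]
    have hor : u = Model κ s ∨ b < (hammingDist u (Model κ s) : ℝ)
        ∨ Detect κ u = true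
        ∨ (Detect κ (resample b (Model κ s) u) = false
            ∧ resample b (Model κ s) u ≠ Model κ s) := by
      by_cases h1 : u = Model κ s
      · exact Or.inl h1
      by_cases h2 : b < (hammingDist u (Model κ s) : ℝ)
      · exact Or.inr (Or.inl h2)
      have hres : resample b (Model κ s) u = u := if_pos (not_lt.1 h2)
      cases hD : Detect κ u
      · exact Or.inr (Or.inr (Or.inr ⟨by rw [hres]; exact hD, by rw [hres]; exact h1⟩))
      · exact Or.inr (Or.inr (Or.inl rfl))
    rcases hor with h | h | h | h
    · rw [if_pos h]
      have := hitenn (b < (hammingDist u (Model κ s) : ℝ))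
      have := hitenn (Detect κ u = true)
      have := hitenn (Detect κ (resample b (Model κ s) u) = false
        ∧ resample b (Model κ s) u ≠ Model κ s)
      linarith
    · rw [if_pos h]
      have := hitenn (u = Model κ s)
      have := hitenn (Detect κ u = true)
      have := hitenn (Detect κ (resample b (Model κ s) u) = false
        ∧ resample b (Model κ s) u ≠ Model κ s)
      linarith
    · rw [if_pos h]
      have := hitenn (u = Model κ s)
      have := hitenn (b < (hammingDist u (Model κ s) : ℝ))
      have := hitenn (Detect κ (resample b (Model κ s) u) = false
        ∧ resample b (Model κ s) u ≠ Model κ s)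
      linarith
    · rw [if_pos h]
      have := hitenn (u = Model κ s)
      have := hitenn (b < (hammingDist u (Model κ s) : ℝ))
      have := hitenn (Detect κ u = true)
      linarith
  -- total mass is 1
  have hws_mul : ∀ κ : K, ∑ s, w κ * ws s * N = w κ * N := by
    intro κ
    rw [show (∑ s, w κ * ws s * N) = ∑ s, ws s * (w κ * N) by
      apply Finset.sum_congr rfl; intro s _; ring]
    rw [← Finset.sum_mul, hws1, one_mul]
  have htotal : (1:ℝ) = ∑ κ, ∑ s, ∑ _u : Fin n → S, w κ * ws s * N := by
    have : ∀ κ s, ∑ _u : Fin n → S, w κ * ws s * N = w κ * ws s := by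
      intro κ s
      rw [← Finset.mul_sum, hsum_u, mul_one]
    rw [Finset.sum_congr rfl fun κ _ => Finset.sum_congr rfl fun s _ => this κ s]
    rw [show (∑ κ, ∑ s, w κ * ws s) = ∑ κ, w κ * ∑ s, ws s by
      apply Finset.sum_congr rfl; intro κ _; rw [Finset.mul_sum]]
    simp [hws1, hw1]
  have hwwN : (∑ κ, ∑ s, w κ * ws s * N) = N := by
    rw [Finset.sum_congr rfl fun κ _ => hws_mul κ, ← Finset.sum_mul, hw1, one_mul]
  -- the four aggregated sums
  have hA1 : (∑ κ, ∑ s, ∑ u : Fin n → S,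
      if u = Model κ s then w κ * ws s * N else 0) = N := by
    simp only [Finset.sum_ite_eq', Finset.mem_univ, if_true]
    exact hwwN
  have hA2 : (∑ κ, ∑ s, ∑ u : Fin n → S,
      if b < (hammingDist u (Model κ s) : ℝ) then w κ * ws s * N else 0) ≤ E := by
    have hch : ∀ κ s, (∑ u : Fin n → S,
        if b < (hammingDist u (Model κ s) : ℝ) then N else 0) ≤ E :=
      fun κ s => chernoff hq δ hδ0 hδ1 (Model κ s)
    have step : ∀ κ s, (∑ u : Fin n → S,
        if b < (hammingDist u (Model κ s) : ℝ) then w κ * ws s * N else 0)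
        ≤ w κ * ws s * E := by
      intro κ s
      rw [show (∑ u : Fin n → S,
          if b < (hammingDist u (Model κ s) : ℝ) then w κ * ws s * N else 0)
          = (w κ * ws s) * ∑ u : Fin n → S,
              (if b < (hammingDist u (Model κ s) : ℝ) then N else 0) by
        rw [Finset.mul_sum]
        apply Finset.sum_congr rfl; intro u _; split_ifs <;> ring]
      exact mul_le_mul_of_nonneg_left (hch κ s) (mul_nonneg (hw0 κ) (hws0 s))
    calc (∑ κ, ∑ s, ∑ u : Fin n → S,
        if b < (hammingDist u (Model κ s) : ℝ) then w κ * ws s * N else 0)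
        ≤ ∑ κ, ∑ s, w κ * ws s * E :=
          Finset.sum_le_sum fun κ _ => Finset.sum_le_sum fun s _ => step κ s
      _ = E := by
          rw [Finset.sum_congr rfl fun κ _ => ?_, ← Finset.sum_mul, hw1, one_mul]
          rw [show (∑ s, w κ * ws s * E) = ∑ s, ws s * (w κ * E) by
            apply Finset.sum_congr rfl; intro s _; ring]
          rw [← Finset.sum_mul, hws1, one_mul]
  have hA3 : (∑ κ, ∑ s, ∑ u : Fin n → S,
      if Detect κ u = true then w κ * ws s * N else 0) ≤ εs := by
    calc (∑ κ, ∑ s, ∑ u : Fin n → S,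
        if Detect κ u = true then w κ * ws s * N else 0)
        = ∑ κ, ∑ u : Fin n → S, ∑ s,
            (if Detect κ u = true then w κ * ws s * N else 0) :=
          Finset.sum_congr rfl fun κ _ => Finset.sum_comm
      _ = ∑ u : Fin n → S, ∑ κ, ∑ s,
            (if Detect κ u = true then w κ * ws s * N else 0) :=
          Finset.sum_comm
      _ = ∑ u : Fin n → S, ∑ κ, (if Detect κ u = true then w κ * N else 0) := by
          apply Finset.sum_congr rfl; intro u _
          apply Finset.sum_congr rfl; intro κ _
          rw [show (∑ s, if Detect κ u = true then w κ * ws s * N else 0)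
              = ∑ s, ws s * (if Detect κ u = true then w κ * N else 0) by
            apply Finset.sum_congr rfl; intro s _; split_ifs <;> ring]
          rw [← Finset.sum_mul, hws1, one_mul]
      _ ≤ ∑ _u : Fin n → S, N * εs := by
          apply Finset.sum_le_sum; intro u _
          rw [show (∑ κ, if Detect κ u = true then w κ * N else 0)
              = N * ∑ κ, (if Detect κ u = true then w κ else 0) by
            rw [Finset.mul_sum]
            apply Finset.sum_congr rfl; intro κ _; split_ifs <;> ring]
          exact mul_le_mul_of_nonneg_left (hsound u) hN0
      _ = εs := by
          rw [show (∑ _u : Fin n → S, N * εs) = (∑ _u : Fin n → S, N) * εs by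
            rw [Finset.sum_mul]]
          rw [hsum_u, one_mul]
  have hineq : (1:ℝ) ≤ N + E + εs + εr := by
    have hstep : (1:ℝ) ≤
        (∑ κ, ∑ s, ∑ u : Fin n → S,
          if u = Model κ s then w κ * ws s * N else 0)
      + (∑ κ, ∑ s, ∑ u : Fin n → S,
          if b < (hammingDist u (Model κ s) : ℝ) then w κ * ws s * N else 0)
      + (∑ κ, ∑ s, ∑ u : Fin n → S,
          if Detect κ u = true then w κ * ws s * N else 0)
      + (∑ κ, ∑ s, ∑ u : Fin n → S,
          if Detect κ (resample b (Model κ s) u) = false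
            ∧ resample b (Model κ s) u ≠ Model κ s then w κ * ws s * N else 0) := by
      rw [htotal]
      calc (∑ κ, ∑ s, ∑ _u : Fin n → S, w κ * ws s * N)
          ≤ ∑ κ, ∑ s, ∑ u : Fin n → S,
              ((if u = Model κ s then w κ * ws s * N else 0)
             + (if b < (hammingDist u (Model κ s) : ℝ) then w κ * ws s * N else 0)
             + (if Detect κ u = true then w κ * ws s * N else 0)
             + (if Detect κ (resample b (Model κ s) u) = false
                  ∧ resample b (Model κ s) u ≠ Model κ s then w κ * ws s * N else 0)) :=
            Finset.sum_le_sum fun κ _ => Finset.sum_le_sum fun s _ =>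
              Finset.sum_le_sum fun u _ => hpt κ s u
        _ = _ := by simp only [Finset.sum_add_distrib]
    linarith [hstep, hA1.le, hA2, hA3, hrobust]
  linarith [hineq]
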